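/- Let ⊘ be a linear left Kronecker quotient over a field F. Then for all m,n,s,t ∈ ℕ and every A ∈ M_nz(F,m,n) there exist (st)² matrices Q_{u,v,u',v'}(A) ∈ M(F,m,n), indexed by u,u' ∈ {1,…,s} and v,v' ∈ {1,…,t}, satisfying Q_{u,v,u',v'}(A) ∘ A = δ_{u,u'}·δ_{v,v'} (a scalar, via the partial Frobenius product with s=t=1), such that for all M ∈ M(F,ms,nt): A ⊘ M = Σ_{u,u'=1}^{s} Σ_{v,v'=1}^{t} e_{u',s} e_{u,s}^T (Q_{u,v,u',v'}(A) ∘ M) e_{v,t} e_{v',t}^T, where e_{i,m} denotes the i-th standard basis column vector of F^m. -/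

import Mathlib

/-!
Theorem: for a linear left Kronecker quotient `⊘` over a field `F`, for all
`m,n,s,t` and every nonzero `A ∈ M(F,m,n)` there exist `(st)²` matrices
`Q u v u' v' ∈ M(F,m,n)` with `Q u v u' v' ∘ A = δ_{u,u'} δ_{v,v'}` (a scalar,
partial Frobenius product with `s = t = 1`) such that for all `M ∈ M(F,ms,nt)`:
`A ⊘ M = ∑_{u,u',v,v'} e_{u'} e_uᵀ (Q u v u' v' ∘ M) e_v e_{v'}ᵀ`.
-/

open Matrix
open scoped Kronecker

/-- The partial Frobenius product `A ∘ M`: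
`(A ∘ M)_{u,v} = ∑_{j,k} A_{j,k} M_{(j,u),(k,v)}`. -/
def pfrob {F : Type*} [Field F] {I J S T : Type*} [Fintype I] [Fintype J]
    (A : Matrix I J F) (M : Matrix (I × S) (J × T) F) : Matrix S T F :=
  Matrix.of fun u v => ∑ j, ∑ k, A j k * M (j, u) (k, v)

/-- The scalar (`s = t = 1`) partial Frobenius product. -/
def pfrobS {F : Type*} [Field F] {I J : Type*} [Fintype I] [Fintype J]
    (A M : Matrix I J F) : F := ∑ j, ∑ k, A j k * M j k


private lemma tri_entry {F : Type*} [Field F] {s t : ℕ}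
    (X : Matrix (Fin s) (Fin t) F) (u u' : Fin s) (v v' : Fin t) (a : Fin s) (b : Fin t) :
    (Matrix.single u' u (1 : F) * X * Matrix.single v v' (1 : F)) a b =
      if u' = a then (if v' = b then X u v else 0) else 0 := by
  simp only [Matrix.mul_apply, Matrix.single, Matrix.of_apply]
  by_cases h1 : u' = a <;> by_cases h2 : v' = b <;>
    simp [h1, h2, Finset.sum_ite_eq, Finset.sum_ite_eq', eq_comm, ite_and, Finset.mul_sum]

theorem linear_kronecker_quotient_decomposition
    {F : Type*} [Field F]
    (q : ∀ (m n s t : ℕ), Matrix (Fin m) (Fin n) F →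
      Matrix (Fin m × Fin s) (Fin n × Fin t) F → Matrix (Fin s) (Fin t) F)
    (hquot : ∀ (m n s t : ℕ) (A : Matrix (Fin m) (Fin n) F), A ≠ 0 →
      ∀ B : Matrix (Fin s) (Fin t) F, q m n s t A (A ⊗ₖ B) = B)
    (hlin : ∀ (m n s t : ℕ) (A : Matrix (Fin m) (Fin n) F), A ≠ 0 →
      IsLinearMap F (q m n s t A)) :
    ∀ (m n s t : ℕ) (A : Matrix (Fin m) (Fin n) F), A ≠ 0 →
      ∃ Q : Fin s → Fin t → Fin s → Fin t → Matrix (Fin m) (Fin n) F,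
        (∀ (u u' : Fin s) (v v' : Fin t),
          pfrobS (Q u v u' v') A = if u = u' ∧ v = v' then (1 : F) else 0) ∧
        (∀ M : Matrix (Fin m × Fin s) (Fin n × Fin t) F,
          q m n s t A M =
            ∑ u : Fin s, ∑ u' : Fin s, ∑ v : Fin t, ∑ v' : Fin t,
              Matrix.single u' u (1 : F) * pfrob (Q u v u' v') M *
                Matrix.single v v' (1 : F)) := by

  intro m n s t A hA
  set L : Matrix (Fin m × Fin s) (Fin n × Fin t) F →ₗ[F] Matrix (Fin s) (Fin t) F :=
    IsLinearMap.mk' (q m n s t A) (hlin m n s t A hA) with hLdef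
  have hLq : ∀ M, q m n s t A M = L M := fun M => rfl
  have key : ∀ M : Matrix (Fin m × Fin s) (Fin n × Fin t) F,
      L M = ∑ p : Fin m × Fin s, ∑ r : Fin n × Fin t,
        M p r • L (Matrix.single p r 1) := by
    intro M
    conv_lhs => rw [Matrix.matrix_eq_sum_single M]
    rw [map_sum]
    refine Finset.sum_congr rfl fun p _ => ?_
    rw [map_sum]
    refine Finset.sum_congr rfl fun r _ => ?_
    rw [← LinearMap.map_smul]
    congr 1
    rw [Matrix.smul_single, smul_eq_mul, mul_one]
  refine ⟨fun u v u' v' => Matrix.of fun j k =>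
      (L (Matrix.single (j,u) (k,v) 1)) u' v', ?_, ?_⟩
  · intro u u' v v'
    have hk : (A ⊗ₖ Matrix.single u v (1 : F)) =
        ∑ j : Fin m, ∑ k : Fin n, A j k •
          Matrix.single ((j,u) : Fin m × Fin s) ((k,v) : Fin n × Fin t) 1 := by
      ext ⟨j, a⟩ ⟨k, b⟩
      simp only [Matrix.kroneckerMap_apply, Matrix.single, Matrix.sum_apply,
        Matrix.smul_apply, Matrix.of_apply, smul_eq_mul, Prod.mk.injEq]
      rw [Finset.sum_eq_single j, Finset.sum_eq_single k]
      · by_cases h1 : a = u <;> by_cases h2 : b = v <;> simp [h1, h2]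
      · intro k' _ hk'; simp [hk']
      · simp
      · intro j' _ hj'
        exact Finset.sum_eq_zero fun k' _ => by simp [hj']
      · simp
    have h := hquot m n s t A hA (Matrix.single u v 1)
    rw [hLq, hk, map_sum] at h
    simp only [map_sum, LinearMap.map_smul] at h
    have h2 := congrFun (congrFun h u') v'
    simp only [Matrix.sum_apply, Matrix.smul_apply, smul_eq_mul] at h2
    simp only [pfrobS, Matrix.of_apply]
    rw [show (∑ j, ∑ k, (L (Matrix.single ((j : Fin m),u) ((k : Fin n),v) 1)) u' v' * A j k)
        = ∑ j, ∑ k, A j k * (L (Matrix.single ((j : Fin m),u) ((k : Fin n),v) 1)) u' v' from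
      Finset.sum_congr rfl fun _ _ => Finset.sum_congr rfl fun _ _ => mul_comm _ _, h2]
    by_cases h1 : u = u' <;> by_cases hv : v = v' <;>
      simp [Matrix.single, h1, hv, eq_comm]
  · intro M
    rw [hLq, key M]
    ext a b
    simp only [Matrix.sum_apply, Matrix.smul_apply, smul_eq_mul, tri_entry]
    trans (∑ u : Fin s, ∑ v : Fin t,
      (pfrob (Matrix.of fun j k =>
        (L (Matrix.single ((j : Fin m), u) ((k : Fin n), v) 1)) a b) M) u v)
    swap
    · refine Finset.sum_congr rfl fun u _ => ?_
      rw [Finset.sum_eq_single a (fun u' _ h => Finset.sum_eq_zero fun v _ =>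
        Finset.sum_eq_zero fun v' _ => by simp [h]) (by simp)]
      simp only [if_pos rfl]
      refine Finset.sum_congr rfl fun v _ => ?_
      rw [Finset.sum_eq_single b (fun v' _ h => by simp [h]) (by simp)]
      simp
    rw [Fintype.sum_prod_type_right]
    refine Finset.sum_congr rfl fun u _ => ?_
    simp only [Fintype.sum_prod_type_right]
    rw [Finset.sum_comm]
    refine Finset.sum_congr rfl fun v _ => ?_
    simp only [pfrob, Matrix.of_apply]
    exact Finset.sum_congr rfl fun j _ => Finset.sum_congr rfl fun k _ => mul_comm _ _
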